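/- Let α, β, κ, μ be orientation-preserving homeomorphisms of ℝ satisfying α²βα²β²α⁻¹β² = id and μ = α⁻¹β⁻² = κ^q with q > 0. If xκ > x for all x ∈ ℝ, then xβ < x for all x ∈ ℝ. -/
import Mathlib


/-- Lemma `lem:beta`: for orientation-preserving homeomorphisms of ℝ (acting on
the right) satisfying `α²βα²β²α⁻¹β² = id` and `μ = α⁻¹β⁻² = κ^q` with `q > 0`,
if `xκ > x` for all `x` then `xβ < x` for all `x`. -/
theorem beta_moves_down (α β κ μ : ℝ ≃o ℝ) (q : ℤ) (hq : 0 < q)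
    -- the relation α²βα²β²α⁻¹β² = 1, read as a right action
    (hrel : ∀ x : ℝ, β (β (α.symm (β (β (α (α (β (α (α x))))))))) = x)
    -- μ = α⁻¹β⁻²
    (hμ : ∀ x : ℝ, μ x = β.symm (β.symm (α.symm x)))
    -- μ = κ^q
    (hμκ : ∀ x : ℝ, μ x = (κ ^ q) x)
    (hκ : ∀ x : ℝ, x < κ x) :
    ∀ x : ℝ, β x < x := by
  -- κ^n moves up for natural n ≥ 1
  have hpow : ∀ (n : ℕ) (x : ℝ), x ≤ (κ ^ n) x := by
    intro n
    induction n with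
    | zero => intro x; simp
    | succ n ih =>
      intro x
      have : (κ ^ (n + 1)) x = (κ ^ n) (κ x) := by
        rw [pow_succ]; rfl
      rw [this]
      exact le_trans (hκ x).le (ih (κ x))
  -- μ moves every point up
  have hμup : ∀ x : ℝ, x < μ x := by
    intro x
    rw [hμκ x]
    obtain ⟨n, rfl⟩ : ∃ n : ℕ, q = (n : ℤ) + 1 := by
      refine ⟨(q - 1).toNat, ?_⟩
      omega
    have : (κ ^ ((n : ℤ) + 1)) x = (κ ^ n) (κ x) := by
      rw [show ((n : ℤ) + 1) = ((n + 1 : ℕ) : ℤ) by push_cast; ring,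
        zpow_natCast, pow_succ]
      rfl
    rw [this]
    exact lt_of_lt_of_le (hκ x) (hpow n (κ x))
  -- hence β(βx) < α⁻¹ x
  have h2 : ∀ x : ℝ, β (β x) < α.symm x := by
    intro x
    have := hμup x
    rw [hμ x] at this
    have h' : β (β x) < β (β (β.symm (β.symm (α.symm x)))) :=
      β.strictMono (β.strictMono this)
    simpa using h'
  -- from the relation: α⁻¹ y < β y for all y
  have h3 : ∀ y : ℝ, α.symm y < β y := by
    intro y
    set x := α.symm (α.symm y) with hx
    have hzy : α (α x) = y := by rw [hx]; simp
    set z := α (α (β y)) with hz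
    have hr := hrel x
    rw [hzy] at hr
    -- hr : β (β (α.symm (β (β z)))) = x
    have hA : β (β z) < α.symm z := h2 z
    have h4 : α.symm (β (β z)) < α.symm (α.symm z) := α.symm.strictMono hA
    have h5 : β (β (α.symm (β (β z)))) < α.symm (α.symm (β (β z))) :=
      h2 _
    have h6 : α.symm (α.symm (β (β z))) < α.symm (α.symm (α.symm z)) :=
      α.symm.strictMono h4
    have h7 : x < α.symm (α.symm (α.symm z)) := hr ▸ lt_trans h5 h6
    have hz3 : α.symm (α.symm (α.symm z)) = α.symm (β y) := by
      rw [hz]; simp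
    rw [hz3, hx] at h7
    -- h7 : α.symm (α.symm y) < α.symm (β y)
    exact α.symm.strictMono.lt_iff_lt.mp h7
  intro x
  have : β (β x) < β x := lt_trans (h2 x) (h3 x)
  exact β.strictMono.lt_iff_lt.mp this
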